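/- (Lemma A.1, local constancy of the merging-pair indicator.) Let ‖·‖ be a norm on ℝⁿ, and let z₁, …, z_b ∈ ℝⁿ (b ≥ 2) have unique pairwise distances. For a 2-element subset {i, j} of {1, …, b}, define the indicator 𝟙_{i,j}(z₁, …, z_b) = 1 iff i and j lie in different connected components of the graph on vertex set {1, …, b} whose edges are the pairs {k, l} with ‖z_k − z_l‖ < ‖z_i − z_j‖, and 𝟙_{i,j} = 0 otherwise. Then there exists ξ > 0 such that for every 1 ≤ u ≤ b, 1 ≤ v ≤ n, and every h ∈ ℝ with |h| < ξ, replacing z_u by z_u + h·e_v (where e_v is the v-th standard basis vector) leaves all indicators unchanged: 𝟙_{i,j}(z'₁, …, z'_b) = 𝟙_{i,j}(z₁, …, z_b) for every pair {i, j}. -/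

import Mathlib

open Classical

/-- The merging-pair indicator `𝟙_{i,j}(z₁, …, z_b)`: it equals `1` iff `i` and `j`
lie in different connected components of the graph on `{1, …, b}` whose edges are
the pairs `{k, l}` with `N(z_k − z_l) < N(z_i − z_j)`, and `0` otherwise. -/
noncomputable def mergeIndicator (n b : ℕ) (N : (Fin n → ℝ) → ℝ)
    (z : Fin b → (Fin n → ℝ)) (i j : Fin b) : ℕ :=
  if (SimpleGraph.fromRel
      (fun k l : Fin b => N (z k - z l) < N (z i - z j))).Reachable i j
  then 0 else 1

/-- Lemma A.1, local constancy of the merging-pair indicator: if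
`z₁, …, z_b` (`b ≥ 2`) have unique pairwise distances w.r.t. the norm `N`, then
there exists `ξ > 0` such that replacing any `z_u` by `z_u + h·e_v` with `|h| < ξ`
leaves all indicators `𝟙_{i,j}` unchanged. -/
theorem indicator_locally_constant
    (n b : ℕ) (hb : 2 ≤ b) (N : (Fin n → ℝ) → ℝ)
    (hN_eq : ∀ x, N x = 0 ↔ x = 0)
    (hN_add : ∀ x y, N (x + y) ≤ N x + N y)
    (hN_smul : ∀ (a : ℝ) (x : Fin n → ℝ), N (a • x) = |a| * N x)
    (z : Fin b → (Fin n → ℝ))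
    (huniq : ∀ i j k l : Fin b, i ≠ j → k ≠ l →
      N (z i - z j) = N (z k - z l) → ({i, j} : Finset (Fin b)) = {k, l}) :
    ∃ ξ > (0 : ℝ), ∀ (u : Fin b) (v : Fin n) (h : ℝ), |h| < ξ →
      ∀ i j : Fin b, i ≠ j →
        mergeIndicator n b N (Function.update z u (z u + h • (Pi.single v 1 : Fin n → ℝ))) i j =
          mergeIndicator n b N z i j := by
  classical
  -- basic facts about N
  have hN0 : N 0 = 0 := (hN_eq 0).2 rfl
  have hNneg : ∀ x, N (-x) = N x := by
    intro x
    have := hN_smul (-1) x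
    simpa using this
  have hNnonneg : ∀ x, 0 ≤ N x := by
    intro x
    have h1 : N (x + (-x)) ≤ N x + N (-x) := hN_add x (-x)
    rw [add_neg_cancel, hN0, hNneg] at h1
    linarith
  have hsym : ∀ (w : Fin b → (Fin n → ℝ)) (k l : Fin b),
      N (w k - w l) = N (w l - w k) := by
    intro w k l
    rw [← hNneg (w k - w l), neg_sub]
  -- the minimal gap δ
  obtain ⟨δ, hδpos, hδ⟩ : ∃ δ > (0 : ℝ), ∀ i j k l : Fin b, i ≠ j → k ≠ l →
      ({i, j} : Finset (Fin b)) ≠ {k, l} →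
      δ ≤ |N (z i - z j) - N (z k - z l)| := by
    set T : Finset (Fin b × Fin b × Fin b × Fin b) :=
      Finset.univ.filter (fun q => q.1 ≠ q.2.1 ∧ q.2.2.1 ≠ q.2.2.2 ∧
        ({q.1, q.2.1} : Finset (Fin b)) ≠ {q.2.2.1, q.2.2.2}) with hT
    by_cases hTne : T.Nonempty
    · refine ⟨T.inf' hTne
        (fun q => |N (z q.1 - z q.2.1) - N (z q.2.2.1 - z q.2.2.2)|), ?_, ?_⟩
      · rw [gt_iff_lt, Finset.lt_inf'_iff]
        intro q hq
        rw [hT, Finset.mem_filter] at hq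
        obtain ⟨-, h1, h2, h3⟩ := hq
        rw [abs_pos, sub_ne_zero]
        intro heq
        exact h3 (huniq _ _ _ _ h1 h2 heq)
      · intro i j k l hij hkl hne
        have hmem : (⟨i, j, k, l⟩ : Fin b × Fin b × Fin b × Fin b) ∈ T := by
          rw [hT, Finset.mem_filter]
          exact ⟨Finset.mem_univ _, hij, hkl, hne⟩
        exact Finset.inf'_le _ hmem
    · refine ⟨1, one_pos, fun i j k l hij hkl hne => ?_⟩
      exfalso
      apply hTne
      refine ⟨⟨i, j, k, l⟩, ?_⟩
      rw [hT, Finset.mem_filter]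
      exact ⟨Finset.mem_univ _, hij, hkl, hne⟩
  -- bound on the basis vectors
  set M : ℝ := 1 + ∑ v : Fin n, N (Pi.single v 1) with hM
  have hMpos : 0 < M := by
    have : 0 ≤ ∑ v : Fin n, N (Pi.single v 1) :=
      Finset.sum_nonneg fun v _ => hNnonneg _
    rw [hM]; linarith
  have hMv : ∀ v : Fin n, N (Pi.single v 1) ≤ M := by
    intro v
    have h1 : N (Pi.single v 1) ≤ ∑ w : Fin n, N (Pi.single w 1) :=
      Finset.single_le_sum (f := fun w => N (Pi.single w 1))
        (fun w _ => hNnonneg _) (Finset.mem_univ v)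
    rw [hM]; linarith
  refine ⟨δ / (4 * M), by positivity, ?_⟩
  intro u v h hh i j hij
  set p : Fin n → ℝ := h • (Pi.single v 1 : Fin n → ℝ) with hp
  set z' : Fin b → (Fin n → ℝ) := Function.update z u (z u + p) with hz'
  -- the perturbation is small
  have hNp : N p ≤ δ / 4 := by
    have h1 : N p = |h| * N (Pi.single v 1) := hN_smul h _
    have h2 : |h| * N (Pi.single v 1) ≤ (δ / (4 * M)) * M := by
      apply mul_le_mul (le_of_lt hh) (hMv v) (hNnonneg _)
      positivity
    have h3 : (δ / (4 * M)) * M = δ / 4 := by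
      field_simp
    rw [h1]; rw [h3] at h2; exact h2
  -- adding a small vector changes N by at most N q
  have key : ∀ a q : Fin n → ℝ, |N (a + q) - N a| ≤ N q := by
    intro a q
    have h1 := hN_add a q
    have h2 : N ((a + q) + (-q)) ≤ N (a + q) + N (-q) := hN_add _ _
    rw [add_neg_cancel_right, hNneg] at h2
    rw [abs_le]
    constructor <;> linarith
  -- each pairwise distance changes by at most N p
  have hdist : ∀ k l : Fin b, |N (z' k - z' l) - N (z k - z l)| ≤ N p := by
    intro k l
    by_cases hk : k = u <;> by_cases hl : l = u
    · subst hk; subst hl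
      simp [hNnonneg p]
    · subst hk
      have e1 : z' k = z k + p := by simp [hz']
      have e2 : z' l = z l := Function.update_of_ne hl _ _
      have e3 : z' k - z' l = (z k - z l) + p := by
        rw [e1, e2]; abel
      rw [e3]; exact key _ _
    · subst hl
      have e1 : z' l = z l + p := by simp [hz']
      have e2 : z' k = z k := Function.update_of_ne hk _ _
      have e3 : z' k - z' l = (z k - z l) + (-p) := by
        rw [e1, e2]; abel
      rw [e3]
      have := key (z k - z l) (-p)
      rwa [hNneg] at this
    · have e1 : z' k = z k := Function.update_of_ne hk _ _
      have e2 : z' l = z l := Function.update_of_ne hl _ _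
      rw [e1, e2]
      simp [hNnonneg p]
  -- pair equality characterization
  have pair_cases : ∀ k l i' j' : Fin b, k ≠ l →
      ({k, l} : Finset (Fin b)) = {i', j'} → (k = i' ∧ l = j') ∨ (k = j' ∧ l = i') := by
    intro k l i' j' hkl hpair
    have hk : k = i' ∨ k = j' := by
      have : k ∈ ({i', j'} : Finset (Fin b)) := hpair ▸ Finset.mem_insert_self k {l}
      simpa using this
    have hl : l = i' ∨ l = j' := by
      have : l ∈ ({i', j'} : Finset (Fin b)) := by
        rw [← hpair]; simp
      simpa using this
    have hi : i' = k ∨ i' = l := by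
      have : i' ∈ ({k, l} : Finset (Fin b)) := by rw [hpair]; simp
      simpa using this
    have hj : j' = k ∨ j' = l := by
      have : j' ∈ ({k, l} : Finset (Fin b)) := by rw [hpair]; simp
      simpa using this
    rcases hk with hk | hk <;> rcases hl with hl | hl
    · exact absurd (hk.trans hl.symm) hkl
    · exact Or.inl ⟨hk, hl⟩
    · exact Or.inr ⟨hk, hl⟩
    · exact absurd (hk.trans hl.symm) hkl
  -- the strict order of distances is preserved
  have horder : ∀ k l : Fin b, k ≠ l →
      (N (z' k - z' l) < N (z' i - z' j) ↔ N (z k - z l) < N (z i - z j)) := by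
    intro k l hkl
    by_cases hpair : ({k, l} : Finset (Fin b)) = {i, j}
    · rcases pair_cases k l i j hkl hpair with ⟨hki, hlj⟩ | ⟨hkj, hli⟩
      · subst hki; subst hlj; simp
      · subst hkj; subst hli
        rw [hsym z' , hsym z]
        simp
    · have h3 : δ ≤ |N (z k - z l) - N (z i - z j)| := by
        have := hδ k l i j hkl hij hpair
        exact this
      have h1 := hdist k l
      have h2 := hdist i j
      rw [abs_le] at h1 h2
      rcases abs_cases (N (z k - z l) - N (z i - z j)) with ⟨h4, h5⟩ | ⟨h4, h5⟩ <;>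
        rw [h4] at h3 <;> constructor <;> intro hlt <;> linarith
  -- the graphs coincide
  have hgraph : SimpleGraph.fromRel (fun k l : Fin b => N (z' k - z' l) < N (z' i - z' j)) =
      SimpleGraph.fromRel (fun k l : Fin b => N (z k - z l) < N (z i - z j)) := by
    ext a c
    simp only [SimpleGraph.fromRel_adj]
    constructor
    · rintro ⟨hac, hrel | hrel⟩
      · exact ⟨hac, Or.inl ((horder a c hac).1 hrel)⟩
      · exact ⟨hac, Or.inr ((horder c a (Ne.symm hac)).1 hrel)⟩
    · rintro ⟨hac, hrel | hrel⟩
      · exact ⟨hac, Or.inl ((horder a c hac).2 hrel)⟩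
      · exact ⟨hac, Or.inr ((horder c a (Ne.symm hac)).2 hrel)⟩
  show (if (SimpleGraph.fromRel
      (fun k l : Fin b => N (z' k - z' l) < N (z' i - z' j))).Reachable i j
    then 0 else 1) = mergeIndicator n b N z i j
  simp only [hgraph, mergeIndicator]
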